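/- Let n ≥ 2r with r ≥ 1, let 𝒜 be an MLCIF on ([n] choose r), let 𝒢 be the canonical generating family of 𝒜, and let k be the rank of 𝒜. Then the subfamily 𝒢 ∩ ([n] choose k), i.e. the family of generators of 𝒜 of size k, is left-compressed (as a family of k-element subsets of [n]). -/

import Mathlib

open Finset

/-- The family of all `r`-element subsets of `[n] = {1, …, n}`. -/
def chooseFam (n r : ℕ) : Finset (Finset ℕ) := (Finset.Icc 1 n).powersetCard r

/-- A family of sets is intersecting if any two members meet. -/
def IntersectingFam (𝒜 : Finset (Finset ℕ)) : Prop :=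
  ∀ A ∈ 𝒜, ∀ B ∈ 𝒜, (A ∩ B).Nonempty

/-- `DomLE B A` : writing the elements in increasing order, the `i`-th element
of `B` is at most the `i`-th element of `A` (and they have the same size). -/
def DomLE (B A : Finset ℕ) : Prop :=
  B.card = A.card ∧
  ∀ (i : ℕ) (hB : i < (B.sort (· ≤ ·)).length) (hA : i < (A.sort (· ≤ ·)).length),
    (B.sort (· ≤ ·)).get ⟨i, hB⟩ ≤ (A.sort (· ≤ ·)).get ⟨i, hA⟩

/-- A family of `r`-subsets of `[n]` is left-compressed if it is downward closed
under the domination order. -/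
def LeftCompressed (n r : ℕ) (𝒜 : Finset (Finset ℕ)) : Prop :=
  ∀ A ∈ 𝒜, ∀ B ∈ chooseFam n r, DomLE B A → B ∈ 𝒜

/-- A left-compressed intersecting family in `([n] choose r)`. -/
def IsLCIF (n r : ℕ) (𝒜 : Finset (Finset ℕ)) : Prop :=
  𝒜 ⊆ chooseFam n r ∧ IntersectingFam 𝒜 ∧ LeftCompressed n r 𝒜

/-- A maximal left-compressed intersecting family. -/
def IsMLCIF (n r : ℕ) (𝒜 : Finset (Finset ℕ)) : Prop :=
  IsLCIF n r 𝒜 ∧ ∀ ℬ : Finset (Finset ℕ), IsLCIF n r ℬ → 𝒜 ⊆ ℬ → ℬ = 𝒜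

/-- The number of members of `𝒜` hitting `X`. -/
def hit (X : Finset ℕ) (𝒜 : Finset (Finset ℕ)) : ℕ :=
  (𝒜.filter fun A => (A ∩ X).Nonempty).card

/-- An MLCIF optimal for `X`: it maximises `hit X` among all MLCIFs. -/
def OptimalMLCIF (n r : ℕ) (X : Finset ℕ) (𝒜 : Finset (Finset ℕ)) : Prop :=
  IsMLCIF n r 𝒜 ∧ ∀ ℬ : Finset (Finset ℕ), IsMLCIF n r ℬ → hit X ℬ ≤ hit X 𝒜

/-- An LCIF optimal for `X` among all LCIFs. -/
def OptimalLCIF (n r : ℕ) (X : Finset ℕ) (𝒜 : Finset (Finset ℕ)) : Prop :=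
  IsLCIF n r 𝒜 ∧ ∀ ℬ : Finset (Finset ℕ), IsLCIF n r ℬ → hit X ℬ ≤ hit X 𝒜

/-- The `t`-adjusted Hilton–Milner family. -/
def AHM (n r t : ℕ) : Finset (Finset ℕ) :=
  (chooseFam n r).filter fun A =>
    (1 ∈ A ∧ (A ∩ Finset.Icc 2 t).Nonempty) ∨ Finset.Icc 2 t ⊆ A

/-- The star: all `r`-subsets of `[n]` containing `1`. -/
def starFam (n r : ℕ) : Finset (Finset ℕ) :=
  (chooseFam n r).filter fun A => 1 ∈ A

/-- `G ⊆ [n]` is a potential generator of `𝒜`: every `A ∈ ([n] choose r)`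
containing `G` lies in `𝒜`. -/
def PotGen (n r : ℕ) (𝒜 : Finset (Finset ℕ)) (G : Finset ℕ) : Prop :=
  G ⊆ Finset.Icc 1 n ∧ ∀ A ∈ chooseFam n r, G ⊆ A → A ∈ 𝒜

open Classical in
/-- The canonical generating family: all inclusion-minimal potential generators. -/
noncomputable def canonGen (n r : ℕ) (𝒜 : Finset (Finset ℕ)) : Finset (Finset ℕ) :=
  (Finset.Icc 1 n).powerset.filter fun G =>
    PotGen n r 𝒜 G ∧ ∀ G' ⊆ G, PotGen n r 𝒜 G' → G' = G

/-- The rank of `𝒜`: the smallest size of a generator. -/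
noncomputable def rankFam (n r : ℕ) (𝒜 : Finset (Finset ℕ)) : ℕ :=
  sInf {k : ℕ | ∃ G ∈ canonGen n r 𝒜, G.card = k}

/-- The family generated by `𝒢` with respect to `n` and `r`. -/
def genFam (n r : ℕ) (𝒢 : Finset (Finset ℕ)) : Finset (Finset ℕ) :=
  (chooseFam n r).filter fun A => ∃ G ∈ 𝒢, G ⊆ A

/-- `𝒜 ∈ I_j`: an MLCIF of rank two whose generators of size two are precisely
`{1,2}, {1,3}, …, {1,j}`. -/
noncomputable def MemI (n r j : ℕ) (𝒜 : Finset (Finset ℕ)) : Prop :=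
  IsMLCIF n r 𝒜 ∧ rankFam n r 𝒜 = 2 ∧
    (canonGen n r 𝒜).filter (fun G => G.card = 2) =
      (Finset.Icc 2 j).image fun i => ({1, i} : Finset ℕ)

section AuxLemmas

private lemma sorted_get_lt {l : List ℕ} (hs : List.Pairwise (· < ·) l) {i j : ℕ}
    (hij : i < j) (hj : j < l.length) : l[i]'(lt_trans hij hj) < l[j] := by
  have := hs.rel_get_of_lt (a := ⟨i, lt_trans hij hj⟩) (b := ⟨j, hj⟩) (Fin.mk_lt_mk.mpr hij)
  simpa using this

private lemma sort_repl (S : Finset ℕ) (a : ℕ) (haS : a ∈ S) (ha1 : 1 ≤ a)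
    (hna : a - 1 ∉ S) :
    ∃ (j : ℕ) (hj : j < (S.sort (· ≤ ·)).length),
      (S.sort (· ≤ ·))[j] = a ∧
      (insert (a-1) (S.erase a)).sort (· ≤ ·) = (S.sort (· ≤ ·)).set j (a-1) := by
  set l := S.sort (· ≤ ·) with hl
  have hsl : List.Pairwise (· < ·) l := hl ▸ (Finset.sortedLT_sort S).pairwise
  have hnd0 : l.Nodup := hl ▸ Finset.sort_nodup S (· ≤ ·)
  have hmemS : ∀ {x : ℕ}, x ∈ l → x ∈ S := fun hx => (Finset.mem_sort (α := ℕ) (· ≤ ·)).1 (hl ▸ hx)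
  have hmem : a ∈ l := hl ▸ (Finset.mem_sort _).2 haS
  obtain ⟨j, hj, hja⟩ := List.mem_iff_getElem.1 hmem
  refine ⟨j, hj, hja, ?_⟩
  set l' := l.set j (a-1) with hl'
  have hlen : l'.length = l.length := List.length_set ..
  have hget : ∀ (i : ℕ) (hi : i < l.length),
      l'[i]'(by rw [hlen]; exact hi) = if j = i then a-1 else l[i] := by
    intro i hi
    exact List.getElem_set (l := l) (i := j) (j := i) (a := a-1)
      (h := by rw [List.length_set]; exact hi)
  have hltj : ∀ (i : ℕ) (hi : i < j), l[i]'(lt_trans hi hj) < a - 1 := by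
    intro i hi
    have h1 : l[i]'(lt_trans hi hj) < l[j] := sorted_get_lt hsl hi hj
    have h2 : l[i]'(lt_trans hi hj) ∈ S := hmemS (List.getElem_mem _)
    have h3 : l[i]'(lt_trans hi hj) ≠ a - 1 := fun h => hna (h ▸ h2)
    omega
  have hgtj : ∀ (i : ℕ) (hi : i < l.length), j < i → a - 1 < l[i] := by
    intro i hi hji
    have h1 : l[j] < l[i] := sorted_get_lt hsl hji hi
    omega
  have hlt : List.Pairwise (· < ·) l' := by
    rw [List.pairwise_iff_getElem]
    intro i k hi hk hik
    rw [hlen] at hi hk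
    rw [hget i hi, hget k hk]
    rcases eq_or_ne j i with rfl | hji
    · rw [if_pos rfl, if_neg (by omega)]
      exact hgtj k hk hik
    · rw [if_neg hji]
      rcases eq_or_ne j k with rfl | hjk
      · rw [if_pos rfl]
        exact hltj i (by omega)
      · rw [if_neg hjk]
        exact sorted_get_lt hsl hik hk
  have hnd : l'.Nodup := hlt.sortedLT.nodup
  have hfs : l'.toFinset = insert (a-1) (S.erase a) := by
    ext x
    simp only [List.mem_toFinset, Finset.mem_insert, Finset.mem_erase]
    constructor
    · intro hx
      obtain ⟨i, hi, hxi⟩ := List.mem_iff_getElem.1 hx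
      rw [hlen] at hi
      rw [hget i hi] at hxi
      rcases eq_or_ne j i with rfl | hji
      · rw [if_pos rfl] at hxi; exact Or.inl hxi.symm
      · rw [if_neg hji] at hxi
        refine Or.inr ⟨?_, ?_⟩
        · rintro rfl
          exact hji ((List.Nodup.getElem_inj_iff hnd0).1 (hja.trans hxi.symm))
        · rw [← hxi]; exact hmemS (List.getElem_mem _)
    · rintro (rfl | ⟨hxa, hxS⟩)
      · have : l'[j]'(by omega) = a - 1 := by rw [hget j hj, if_pos rfl]
        rw [← this]; exact List.getElem_mem _
      · obtain ⟨i, hi, hxi⟩ := List.mem_iff_getElem.1 (show x ∈ l from hl ▸ (Finset.mem_sort (α := ℕ) (· ≤ ·)).2 hxS)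
        have hij : j ≠ i := by rintro rfl; exact hxa (by rw [← hxi, hja])
        have : l'[i]'(by omega) = x := by rw [hget i hi, if_neg hij]; exact hxi
        rw [← this]; exact List.getElem_mem _
  rw [← hfs]
  exact List.SortedLT.eq_of_mem_iff (Finset.sortedLT_sort _) hlt.sortedLT (fun x => by simp)

private lemma dom_repl (S : Finset ℕ) (a : ℕ) (haS : a ∈ S) (ha1 : 1 ≤ a)
    (hna : a - 1 ∉ S) : DomLE (insert (a-1) (S.erase a)) S := by
  obtain ⟨j, hj, hja, hsort⟩ := sort_repl S a haS ha1 hna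
  have hcard : (insert (a-1) (S.erase a)).card = S.card := by
    rw [← Finset.length_sort (· ≤ ·), hsort, List.length_set, Finset.length_sort]
  refine ⟨hcard, ?_⟩
  intro i hB hA
  simp only [List.get_eq_getElem]
  rw [List.getElem_of_eq hsort hB, List.getElem_set]
  split
  · next h => subst h; rw [hja]; omega
  · exact le_refl _

end AuxLemmas

section MainLemmas

private lemma sorted_get_le {l : List ℕ} (hs : List.Pairwise (· < ·) l) {i j : ℕ}
    (hij : i ≤ j) (hj : j < l.length) : l[i]'(lt_of_le_of_lt hij hj) ≤ l[j] := by
  rcases eq_or_lt_of_le hij with rfl | h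
  · exact le_refl _
  · exact le_of_lt (sorted_get_lt hs h hj)

private lemma mem_chooseFam {n r : ℕ} {A : Finset ℕ} :
    A ∈ chooseFam n r ↔ A ⊆ Finset.Icc 1 n ∧ A.card = r := Finset.mem_powersetCard

private lemma potGen_step (n r : ℕ) (𝒜 : Finset (Finset ℕ)) (hLC : LeftCompressed n r 𝒜)
    (A : Finset ℕ) (hA : PotGen n r 𝒜 A) (a : ℕ) (haA : a ∈ A) (ha2 : 2 ≤ a)
    (hna : a - 1 ∉ A) : PotGen n r 𝒜 (insert (a-1) (A.erase a)) := by
  have haIcc : a ∈ Finset.Icc 1 n := hA.1 haA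
  have han : a ≤ n := (Finset.mem_Icc.1 haIcc).2
  constructor
  · intro x hx
    rcases Finset.mem_insert.1 hx with rfl | hx
    · exact Finset.mem_Icc.2 ⟨by omega, by omega⟩
    · exact hA.1 (Finset.erase_subset _ _ hx)
  · intro C hC hsubC
    have haC1 : a - 1 ∈ C := hsubC (Finset.mem_insert_self _ _)
    have hAerase : A.erase a ⊆ C := (Finset.subset_insert _ _).trans hsubC
    by_cases hac : a ∈ C
    · have hAC : A ⊆ C := by
        intro x hx
        rcases eq_or_ne x a with rfl | hxa
        · exact hac
        · exact hAerase (Finset.mem_erase.2 ⟨hxa, hx⟩)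
      exact hA.2 C hC hAC
    · set C' := insert a (C.erase (a-1)) with hC'def
      have hanotC : a ∉ C.erase (a-1) := fun h => hac (Finset.erase_subset _ _ h)
      have hcardC' : C'.card = C.card := by
        rw [hC'def, Finset.card_insert_of_notMem hanotC, Finset.card_erase_of_mem haC1]
        have : 1 ≤ C.card := Finset.card_pos.2 ⟨a-1, haC1⟩
        omega
      have hC'mem : C' ∈ chooseFam n r := by
        rw [mem_chooseFam] at hC ⊢
        refine ⟨?_, by rw [hcardC', hC.2]⟩
        intro x hx
        rcases Finset.mem_insert.1 hx with rfl | hx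
        · exact haIcc
        · exact hC.1 (Finset.erase_subset _ _ hx)
      have hAC' : A ⊆ C' := by
        intro x hx
        rcases eq_or_ne x a with rfl | hxa
        · exact Finset.mem_insert_self _ _
        · have hxC : x ∈ C := hAerase (Finset.mem_erase.2 ⟨hxa, hx⟩)
          have hxne : x ≠ a - 1 := fun h => hna (h ▸ hx)
          exact Finset.mem_insert.2 (Or.inr (Finset.mem_erase.2 ⟨hxne, hxC⟩))
      have hC'A : C' ∈ 𝒜 := hA.2 C' hC'mem hAC'
      have hCrepr : C = insert (a-1) (C'.erase a) := by
        rw [hC'def, Finset.erase_insert hanotC, Finset.insert_erase haC1]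
      have hdom : DomLE C C' := by
        rw [hCrepr]
        apply dom_repl C' a (Finset.mem_insert_self _ _) (by omega)
        intro h
        rcases Finset.mem_insert.1 h with h | h
        · omega
        · exact (Finset.mem_erase.1 h).1 rfl
      exact hLC C' hC'A C hC hdom

private lemma sorted_getD_lt {l : List ℕ} (hs : List.Pairwise (· < ·) l) {i j : ℕ}
    (hij : i < j) (hj : j < l.length) : l.getD i 0 < l.getD j 0 := by
  rw [List.getD_eq_getElem l 0 (lt_trans hij hj), List.getD_eq_getElem l 0 hj]
  exact sorted_get_lt hs hij hj

private lemma sorted_getD_le {l : List ℕ} (hs : List.Pairwise (· < ·) l) {i j : ℕ}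
    (hij : i ≤ j) (hj : j < l.length) : l.getD i 0 ≤ l.getD j 0 := by
  rcases eq_or_lt_of_le hij with rfl | h
  · exact le_refl _
  · exact le_of_lt (sorted_getD_lt hs h hj)

set_option maxHeartbeats 1000000 in
private lemma potGen_of_domLE (n r : ℕ) (𝒜 : Finset (Finset ℕ))
    (hLC : LeftCompressed n r 𝒜) :
    ∀ s : ℕ, ∀ A : Finset ℕ, (∑ x ∈ A, x) = s → PotGen n r 𝒜 A →
      ∀ B : Finset ℕ, B ⊆ Finset.Icc 1 n → DomLE B A → PotGen n r 𝒜 B := by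
  intro s
  induction s using Nat.strong_induction_on with
  | _ s ih =>
  intro A hs hA B hBn hdom
  classical
  have hslA : List.Pairwise (· < ·) (A.sort (· ≤ ·)) := (Finset.sortedLT_sort A).pairwise
  have hslB : List.Pairwise (· < ·) (B.sort (· ≤ ·)) := (Finset.sortedLT_sort B).pairwise
  have hlen : (B.sort (· ≤ ·)).length = (A.sort (· ≤ ·)).length := by
    rw [Finset.length_sort, Finset.length_sort, hdom.1]
  have hd : ∀ i : ℕ, i < (A.sort (· ≤ ·)).length →
      (B.sort (· ≤ ·)).getD i 0 ≤ (A.sort (· ≤ ·)).getD i 0 := by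
    intro i h
    rw [List.getD_eq_getElem (B.sort (· ≤ ·)) 0 (show i < (B.sort (· ≤ ·)).length by omega),
      List.getD_eq_getElem (A.sort (· ≤ ·)) 0 h]
    exact hdom.2 i (by omega) h
  by_cases hex : ∃ i, i < (A.sort (· ≤ ·)).length ∧
      (B.sort (· ≤ ·)).getD i 0 < (A.sort (· ≤ ·)).getD i 0
  · obtain ⟨hj, hjlt⟩ := Nat.find_spec hex
    have hmin : ∀ i, i < Nat.find hex → i < (A.sort (· ≤ ·)).length →
        (A.sort (· ≤ ·)).getD i 0 ≤ (B.sort (· ≤ ·)).getD i 0 := by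
      intro i hij h
      have hnot := Nat.find_min hex hij
      push_neg at hnot
      exact hnot h
    set j := Nat.find hex with hjdef
    set a := (A.sort (· ≤ ·)).getD j 0 with hadef
    set b := (B.sort (· ≤ ·)).getD j 0 with hbdef
    have hjB : j < (B.sort (· ≤ ·)).length := by omega
    have haA : a ∈ A := by
      have h1 : a ∈ A.sort (· ≤ ·) := by
        rw [hadef, List.getD_eq_getElem (A.sort (· ≤ ·)) 0 hj]
        exact List.getElem_mem hj
      exact (Finset.mem_sort (· ≤ ·)).1 h1
    have hbB : b ∈ B := by
      have h1 : b ∈ B.sort (· ≤ ·) := by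
        rw [hbdef, List.getD_eq_getElem (B.sort (· ≤ ·)) 0 hjB]
        exact List.getElem_mem hjB
      exact (Finset.mem_sort (· ≤ ·)).1 h1
    have hb1 : 1 ≤ b := (Finset.mem_Icc.1 (hBn hbB)).1
    have ha2 : 2 ≤ a := by omega
    have hnaA : a - 1 ∉ A := by
      intro hmem
      have hmem' : a - 1 ∈ A.sort (· ≤ ·) := (Finset.mem_sort (· ≤ ·)).2 hmem
      obtain ⟨i, hi, hieq⟩ := List.mem_iff_getElem.1 hmem'
      rw [← List.getD_eq_getElem (A.sort (· ≤ ·)) 0 hi] at hieq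
      have hij : i < j := by
        by_contra hcon
        push_neg at hcon
        have := sorted_getD_le hslA hcon hi
        omega
      have h1 := hmin i hij (by omega)
      have h2 := sorted_getD_lt hslB hij hjB
      omega
    have hA''pot : PotGen n r 𝒜 (insert (a - 1) (A.erase a)) :=
      potGen_step n r 𝒜 hLC A hA a haA ha2 hnaA
    obtain ⟨j', hj', hj'eq, hsort''⟩ := sort_repl A a haA (by omega) hnaA
    rw [← List.getD_eq_getElem (A.sort (· ≤ ·)) 0 hj'] at hj'eq
    have hjj' : j' = j := by
      rcases lt_trichotomy j' j with h | h | h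
      · have := sorted_getD_lt hslA h hj; omega
      · exact h
      · have := sorted_getD_lt hslA h hj'; omega
    subst hjj'
    have hsum : ∑ x ∈ insert (a - 1) (A.erase a), x < s := by
      rw [Finset.sum_insert (fun h => hnaA (Finset.erase_subset _ _ h))]
      have h1 : ∑ x ∈ A, x = a + ∑ x ∈ A.erase a, x :=
        (Finset.add_sum_erase A _ haA).symm
      omega
    have hdom'' : DomLE B (insert (a - 1) (A.erase a)) := by
      have hcard'' : (insert (a - 1) (A.erase a)).card = A.card := by
        rw [← Finset.length_sort (α := ℕ) (· ≤ ·), hsort'', List.length_set, Finset.length_sort]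
      refine ⟨by rw [hcard'', hdom.1], ?_⟩
      intro i hBi hAi
      have hiA : i < (A.sort (· ≤ ·)).length := by
        have h1 := hAi
        rw [hsort'', List.length_set] at h1
        exact h1
      have hBi' : i < (B.sort (· ≤ ·)).length := by omega
      have key : ((insert (a - 1) (A.erase a)).sort (· ≤ ·)).get ⟨i, hAi⟩ =
          if j = i then a - 1 else (A.sort (· ≤ ·)).getD i 0 := by
        simp only [List.get_eq_getElem]
        rw [List.getElem_of_eq hsort'' hAi, List.getElem_set]
        split
        · rfl
        · rw [List.getD_eq_getElem (A.sort (· ≤ ·)) 0 hiA]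
      have hBg : (B.sort (· ≤ ·)).get ⟨i, hBi⟩ = (B.sort (· ≤ ·)).getD i 0 := by
        simp only [List.get_eq_getElem]
        rw [List.getD_eq_getElem (B.sort (· ≤ ·)) 0 hBi']
      rw [key, hBg]
      split
      · next h =>
        subst h
        omega
      · exact hd i hiA
    exact ih _ hsum _ rfl hA''pot B hBn hdom''
  · push_neg at hex
    have heq : B.sort (· ≤ ·) = A.sort (· ≤ ·) := by
      apply List.ext_getElem hlen
      intro i h1 h2
      have h3 := hd i h2
      have h4 := hex i h2
      rw [List.getD_eq_getElem (B.sort (· ≤ ·)) 0 h1, List.getD_eq_getElem (A.sort (· ≤ ·)) 0 h2]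
        at h3 h4
      omega
    have hBA : B = A := by
      rw [← Finset.sort_toFinset B (· ≤ ·), ← Finset.sort_toFinset A (· ≤ ·), heq]
    rwa [hBA]

private lemma exists_gen (n r : ℕ) (𝒜 : Finset (Finset ℕ)) :
    ∀ c : ℕ, ∀ G : Finset ℕ, G.card = c → PotGen n r 𝒜 G →
      ∃ H ∈ canonGen n r 𝒜, H ⊆ G := by
  intro c
  induction c using Nat.strong_induction_on with
  | _ c ih =>
  intro G hGc hG
  by_cases hmin : ∀ G' ⊆ G, PotGen n r 𝒜 G' → G' = G
  · refine ⟨G, ?_, Finset.Subset.refl G⟩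
    simp only [canonGen, Finset.mem_filter, Finset.mem_powerset]
    exact ⟨hG.1, hG, hmin⟩
  · push_neg at hmin
    obtain ⟨G', hG'sub, hG'pot, hne⟩ := hmin
    have hlt : G'.card < c := hGc ▸ Finset.card_lt_card (ssubset_of_subset_of_ne hG'sub hne)
    obtain ⟨H, hH, hHsub⟩ := ih _ hlt G' rfl hG'pot
    exact ⟨H, hH, hHsub.trans hG'sub⟩

end MainLemmas

/-- For `n ≥ 2r`, `r ≥ 1`, an MLCIF `𝒜` with canonical
generating family `𝒢` and rank `k`, the family of generators of size `k` is
left-compressed (as a family of `k`-element subsets of `[n]`). -/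
theorem stmt10 (n r : ℕ) (hr : 1 ≤ r) (hn : 2 * r ≤ n) (𝒜 : Finset (Finset ℕ))
    (hA : IsMLCIF n r 𝒜) :
    LeftCompressed n (rankFam n r 𝒜)
      ((canonGen n r 𝒜).filter fun G => G.card = rankFam n r 𝒜) := by
  intro A hAmem B hBmem hdom
  classical
  rw [Finset.mem_filter] at hAmem
  obtain ⟨hAgen, hAcard⟩ := hAmem
  have hApg : PotGen n r 𝒜 A := by
    have h := hAgen
    simp only [canonGen, Finset.mem_filter, Finset.mem_powerset] at h
    exact h.2.1
  have hBmem' := mem_chooseFam.1 hBmem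
  obtain ⟨hBsub, hBcard⟩ := hBmem'
  have hLC : LeftCompressed n r 𝒜 := hA.1.2.2
  have hBpg : PotGen n r 𝒜 B :=
    potGen_of_domLE n r 𝒜 hLC (∑ x ∈ A, x) A rfl hApg B hBsub hdom
  obtain ⟨H, hH, hHsub⟩ := exists_gen n r 𝒜 B.card B rfl hBpg
  have hk : rankFam n r 𝒜 ≤ H.card := Nat.sInf_le ⟨H, hH, rfl⟩
  have hHcard : H.card ≤ B.card := Finset.card_le_card hHsub
  have hHB : H = B := Finset.eq_of_subset_of_card_le hHsub (by omega)
  rw [Finset.mem_filter]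
  exact ⟨hHB ▸ hH, hBcard⟩
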